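/- Let A be an m×n integer matrix of full column rank all of whose sub-determinants are bounded in absolute value by Δ. Let B be a set of n row indices such that the rows a_i, i ∈ B, are linearly independent, and let i ∈ B. Then the Euclidean distance from the unit vector a_i/‖a_i‖ to the linear span of the rows a_j, j ∈ B \ {i}, is at least 1/(n·Δ²). -/

import Mathlib

open Finset Matrix RealInnerProductSpace

private lemma adjBound {n : ℕ} (M : Matrix (Fin n) (Fin n) ℤ) (Δ : ℤ)
    (h : ∀ k : ℕ, ∀ f g : Fin k → Fin n, Function.Injective f → Function.Injective g →
      |(M.submatrix f g).det| ≤ Δ) (i j : Fin n) : |M.adjugate i j| ≤ Δ := by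
  cases n with
  | zero => exact i.elim0
  | succ n =>
    rw [Matrix.adjugate_fin_succ_eq_det_submatrix, abs_mul, abs_pow, abs_neg, abs_one,
      one_pow, one_mul]
    exact h n j.succAbove i.succAbove (Fin.succAbove_right_injective)
      (Fin.succAbove_right_injective)

private lemma normBound {n : ℕ} (x : EuclideanSpace ℝ (Fin n)) (d : ℝ) (hd : 0 ≤ d)
    (h : ∀ l, |x l| ≤ d) : ‖x‖ ≤ Real.sqrt n * d := by
  rw [EuclideanSpace.norm_eq]
  have h1 : ∑ l, ‖x l‖ ^ 2 ≤ (n : ℝ) * d ^ 2 := by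
    calc ∑ l, ‖x l‖ ^ 2 ≤ ∑ _l : Fin n, d ^ 2 := by
          refine Finset.sum_le_sum fun l _ => ?_
          have h2 := h l
          have h3 : ‖x l‖ = |x l| := Real.norm_eq_abs _
          nlinarith [abs_nonneg (x l)]
      _ = (n : ℝ) * d ^ 2 := by simp [Finset.sum_const, mul_comm]
  calc Real.sqrt (∑ l, ‖x l‖ ^ 2) ≤ Real.sqrt ((n : ℝ) * d ^ 2) := Real.sqrt_le_sqrt h1
    _ = Real.sqrt n * d := by
        rw [Real.sqrt_mul (Nat.cast_nonneg n), Real.sqrt_sq hd]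

/-- An integer matrix with full column rank whose sub-determinants are
bounded by `Δ` satisfies: the distance from a normalized row to the span of the
other rows of a basis is at least `1/(n·Δ²)`. -/
theorem stmt0 (m n : ℕ) (A : Matrix (Fin m) (Fin n) ℤ) (Δ : ℕ) (hΔ : 1 ≤ Δ)
    (hrank : A.rank = n)
    (hsub : ∀ k : ℕ, ∀ f : Fin k → Fin m, ∀ g : Fin k → Fin n,
      Function.Injective f → Function.Injective g →
      |(A.submatrix f g).det| ≤ (Δ : ℤ))
    (a : Fin m → EuclideanSpace ℝ (Fin n))
    (ha : ∀ i l, a i l = (A i l : ℝ))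
    (B : Finset (Fin m)) (hB : B.card = n)
    (hind : LinearIndependent ℝ (fun j : B => a j))
    (i : Fin m) (hi : i ∈ B) :
    (1 : ℝ) / (n * Δ ^ 2) ≤
      Metric.infDist ((‖a i‖)⁻¹ • a i)
        (Submodule.span ℝ (a '' (B.erase i : Finset (Fin m))) : Set (EuclideanSpace ℝ (Fin n))) := by
  classical
  have hn0 : 0 < n := hB ▸ Finset.card_pos.mpr ⟨i, hi⟩
  -- enumeration of B
  let e : Fin n ≃ {x // x ∈ B} := (finCongr hB.symm).trans B.equivFin.symm
  set f : Fin n → Fin m := fun k => (e k : Fin m) with hf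
  have hfinj : Function.Injective f := fun x y hxy => e.injective (Subtype.ext hxy)
  set j : Fin n := e.symm ⟨i, hi⟩ with hj
  have hfj : f j = i := by simp [hf, hj]
  -- matrices
  set M : Matrix (Fin n) (Fin n) ℤ := A.submatrix f id with hM
  set N : Matrix (Fin n) (Fin n) ℝ := M.map (Int.cast) with hN
  have hNdet : N.det = (M.det : ℝ) := by
    rw [hN]; exact (RingHom.map_det (Int.castRingHom ℝ) M).symm
  have hNrow : ∀ k l, N k l = a (f k) l := by
    intro k l
    rw [ha]
    simp [hN, hM]
  -- linear independence of the rows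
  have hind2 : LinearIndependent ℝ (fun k : Fin n => a (f k)) :=
    hind.comp e e.injective
  have hind3 : LinearIndependent ℝ (fun k : Fin n => N k) := by
    have h4 := hind2.map' (EuclideanSpace.equiv (Fin n) ℝ).toLinearEquiv.toLinearMap
      (LinearEquiv.ker _)
    convert h4 using 1
    funext k
    funext l
    exact (hNrow k l)
    all_goals rfl
  have hNunit : IsUnit N := Matrix.linearIndependent_rows_iff_isUnit.mp hind3
  have hNdetne : N.det ≠ 0 := by
    have := (Matrix.isUnit_iff_isUnit_det N).mp hNunit
    exact this.ne_zero
  have hMdetne : M.det ≠ 0 := fun h => hNdetne (by rw [hNdet, h, Int.cast_zero])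
  have hMdet1 : (1 : ℝ) ≤ |N.det| := by
    rw [hNdet, ← Int.cast_abs]
    exact_mod_cast Int.one_le_abs hMdetne
  have hNN : N * N⁻¹ = 1 := Matrix.mul_nonsing_inv N (isUnit_iff_ne_zero.mpr hNdetne)
  -- the dual vector c
  set c : EuclideanSpace ℝ (Fin n) := WithLp.toLp 2 (fun l => N⁻¹ l j : Fin n → ℝ) with hc
  -- entry bounds for c
  have hsubM : ∀ k : ℕ, ∀ f' g' : Fin k → Fin n, Function.Injective f' →
      Function.Injective g' → |(M.submatrix f' g').det| ≤ (Δ : ℤ) := by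
    intro k f' g' hf' hg'
    have : M.submatrix f' g' = A.submatrix (f ∘ f') g' := by
      rw [hM, Matrix.submatrix_submatrix]
      rfl
    rw [this]
    exact hsub k (f ∘ f') g' (hfinj.comp hf') hg'
  have hcl : ∀ l, |c l| ≤ (Δ : ℝ) := by
    intro l
    have hcval : c l = N⁻¹ l j := rfl
    rw [hcval, Matrix.inv_def]
    simp only [Matrix.smul_apply, smul_eq_mul]
    rw [abs_mul]
    have h1 : |Ring.inverse N.det| ≤ 1 := by
      rw [Ring.inverse_eq_inv', abs_inv]
      exact inv_le_one_of_one_le₀ hMdet1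
    have h2 : |N.adjugate l j| ≤ (Δ : ℝ) := by
      have hmap : N.adjugate = (M.adjugate).map (Int.cast) := by
        rw [hN]
        exact ((Int.castRingHom ℝ).map_adjugate M).symm
      rw [hmap]
      simp only [Matrix.map_apply]
      rw [← Int.cast_abs]
      exact_mod_cast adjBound M (Δ : ℤ) hsubM l j
    calc |Ring.inverse N.det| * |N.adjugate l j| ≤ 1 * (Δ : ℝ) := by
          apply mul_le_mul h1 h2 (abs_nonneg _) zero_le_one
      _ = (Δ : ℝ) := one_mul _
  have hΔ0 : (0 : ℝ) ≤ (Δ : ℝ) := Nat.cast_nonneg _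
  have hcnorm : ‖c‖ ≤ Real.sqrt n * Δ := normBound c _ hΔ0 hcl
  have hanorm : ‖a i‖ ≤ Real.sqrt n * Δ := by
    refine normBound _ _ hΔ0 fun l => ?_
    rw [ha, ← Int.cast_abs]
    have := hsub 1 (fun _ => i) (fun _ => l)
      (Function.injective_of_subsingleton _) (Function.injective_of_subsingleton _)
    rw [Matrix.det_fin_one, Matrix.submatrix_apply] at this
    have h8 : ((|A i l| : ℤ) : ℝ) ≤ ((Δ : ℤ) : ℝ) := Int.cast_le.mpr this
    simpa using h8
  -- inner products
  have hinner : ∀ k : Fin n, ⟪a (f k), c⟫ = if k = j then (1 : ℝ) else 0 := by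
    intro k
    have : ⟪a (f k), c⟫ = ∑ l, N k l * N⁻¹ l j := by
      rw [PiLp.inner_apply]
      refine Finset.sum_congr rfl fun l _ => ?_
      rw [RCLike.inner_apply, starRingEnd_apply, star_trivial, hNrow, mul_comm]
    rw [this, ← Matrix.mul_apply, hNN, Matrix.one_apply]
  have hainner : ⟪a i, c⟫ = (1 : ℝ) := by
    rw [← hfj, hinner, if_pos rfl]
  -- orthogonality to the span
  have hortho : ∀ y ∈ Submodule.span ℝ (a '' (B.erase i : Finset (Fin m))),
      ⟪y, c⟫ = (0 : ℝ) := by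
    intro y hy
    induction hy using Submodule.span_induction with
    | mem x hx =>
      obtain ⟨t, ht, rfl⟩ := hx
      have ht' : t ∈ B.erase i := Finset.mem_coe.mp ht
      have htB : t ∈ B := Finset.mem_of_mem_erase ht'
      set k : Fin n := e.symm ⟨t, htB⟩ with hk
      have hfk : f k = t := by simp [hf, hk]
      have hkj : k ≠ j := by
        intro hkj'
        apply Finset.ne_of_mem_erase ht'
        have := congrArg f hkj'
        rw [hfk, hfj] at this
        exact this
      rw [← hfk, hinner, if_neg hkj]
    | zero => simp
    | add x z _ _ hx hz => rw [inner_add_left, hx, hz, add_zero]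
    | smul r x _ hx => rw [real_inner_smul_left, hx, mul_zero]
  -- a i ≠ 0
  have hai : a i ≠ 0 := by
    have := hind2.ne_zero j
    rwa [hfj] at this
  have hain : (0 : ℝ) < ‖a i‖ := norm_pos_iff.mpr hai
  have hpos : (0 : ℝ) < (n : ℝ) * (Δ : ℝ) ^ 2 := by
    have h1 : (0 : ℝ) < (n : ℝ) := Nat.cast_pos.mpr hn0
    have h2 : (0 : ℝ) < (Δ : ℝ) := by exact_mod_cast hΔ
    positivity
  -- final bound: pointwise distance bound
  by_contra hcon
  push_neg at hcon
  obtain ⟨y, hy, hlt⟩ := (Metric.infDist_lt_iff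
    ⟨0, Submodule.zero_mem _⟩).mp hcon
  have hy' : ⟪y, c⟫ = (0 : ℝ) := hortho y hy
  set x : EuclideanSpace ℝ (Fin n) := (‖a i‖)⁻¹ • a i with hx
  have hxy : ⟪x - y, c⟫ = (‖a i‖)⁻¹ := by
    rw [inner_sub_left, hy', sub_zero, hx, real_inner_smul_left, hainner, mul_one]
  have hCS : (‖a i‖)⁻¹ ≤ ‖x - y‖ * ‖c‖ := by
    have h5 := abs_real_inner_le_norm (x - y) c
    rw [hxy] at h5
    calc (‖a i‖)⁻¹ ≤ |(‖a i‖)⁻¹| := le_abs_self _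
      _ ≤ ‖x - y‖ * ‖c‖ := h5
  have hone : 1 ≤ ‖x - y‖ * ‖c‖ * ‖a i‖ := by
    have := mul_le_mul_of_nonneg_right hCS (le_of_lt hain)
    rwa [inv_mul_cancel₀ (ne_of_gt hain)] at this
  have hsq : Real.sqrt n * Real.sqrt n = (n : ℝ) :=
    Real.mul_self_sqrt (Nat.cast_nonneg n)
  have hprod : ‖c‖ * ‖a i‖ ≤ (n : ℝ) * (Δ : ℝ) ^ 2 := by
    have h6 : ‖c‖ * ‖a i‖ ≤ (Real.sqrt n * Δ) * (Real.sqrt n * Δ) :=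
      mul_le_mul hcnorm hanorm (norm_nonneg _) (by positivity)
    calc ‖c‖ * ‖a i‖ ≤ (Real.sqrt n * Δ) * (Real.sqrt n * Δ) := h6
      _ = (n : ℝ) * (Δ : ℝ) ^ 2 := by linear_combination (Δ : ℝ) ^ 2 * hsq
  have hdist : dist x y = ‖x - y‖ := dist_eq_norm x y
  rw [lt_div_iff₀ hpos] at hlt
  have h7 : ‖x - y‖ * ‖c‖ * ‖a i‖ ≤ ‖x - y‖ * ((n : ℝ) * (Δ : ℝ) ^ 2) := by
    rw [mul_assoc]
    exact mul_le_mul_of_nonneg_left hprod (norm_nonneg _)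
  rw [hdist] at hlt
  nlinarith
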